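/- Let $(M_t)_{t\ge 0}$ be a continuous local martingale started in zero with quadratic variation process $\langle M\rangle$. Then for every $\kappa>0$, $\mathbb{P}(\sup_{t\ge 0}(M_t-\langle M\rangle_t)\ge \kappa)\le \kappa^{-2}+\sum_{n=0}^\infty 2^{n+1}(2^n+\kappa)^{-2}$. -/

import Mathlib

open MeasureTheory Filter
open scoped NNReal ENNReal

open MeasureTheory Filter Set
open scoped NNReal ENNReal Topology

section Core

variable {Ω : Type*} {m : MeasurableSpace Ω} {ℙ : Measure Ω} [IsProbabilityMeasure ℙ]

lemma core_bound
    (ℱ : Filtration ℝ≥0 m) (X A : ℝ≥0 → Ω → ℝ)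
    (hX0 : ∀ ω, X 0 ω = 0) (hXc : ∀ ω, Continuous fun t => X t ω)
    (hA0 : ∀ ω, A 0 ω = 0) (hAc : ∀ ω, Continuous fun t => A t ω)
    (hAm : ∀ ω, Monotone fun t => A t ω)
    (hX : Martingale X ℱ ℙ)
    (hZ : Martingale (fun t ω => X t ω ^ 2 - A t ω) ℱ ℙ)
    (S : ℝ≥0) (c l l' : ℝ) (hc : 0 < c) (hl' : 0 < l') (hll : l' < l) :
    ℙ {ω | ∃ t ≤ S, A t ω ≤ c ∧ l ≤ X t ω} ≤ ENNReal.ofReal (c / l' ^ 2) := by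
  classical
  set U : Ω → Set ℝ≥0 := fun ω => insert S {t | t ≤ S ∧ (l' < X t ω ∨ c < A t ω)} with hU
  have hUne : ∀ ω, (U ω).Nonempty := fun ω => ⟨S, Set.mem_insert _ _⟩
  set T : Ω → ℝ≥0 := fun ω => sInf (U ω) with hTdef
  have hTS : ∀ ω, T ω ≤ S := fun ω => csInf_le (OrderBot.bddBelow _) (Set.mem_insert _ _)
  have hmemT : ∀ ω t, t ∈ U ω → T ω ≤ t := fun ω t ht => csInf_le (OrderBot.bddBelow _) ht
  have hFree : ∀ ω s, s < T ω → X s ω ≤ l' ∧ A s ω ≤ c := by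
    intro ω s hs
    have hsS : s ≤ S := le_trans hs.le (hTS ω)
    constructor
    · by_contra h; push_neg at h
      exact absurd (hmemT ω s (Set.mem_insert_of_mem _ ⟨hsS, Or.inl h⟩)) (not_le.2 hs)
    · by_contra h; push_neg at h
      exact absurd (hmemT ω s (Set.mem_insert_of_mem _ ⟨hsS, Or.inr h⟩)) (not_le.2 hs)
  have hAT : ∀ ω, A (T ω) ω ≤ c := by
    intro ω
    rcases eq_or_ne (T ω) 0 with h0 | h0
    · rw [h0, hA0]; exact hc.le
    · have hpos : 0 < T ω := pos_iff_ne_zero.2 h0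
      haveI : (𝓝[<] (T ω)).NeBot := nhdsWithin_Iio_self_neBot' ⟨0, hpos⟩
      have htd : Tendsto (fun s => A s ω) (𝓝[<] (T ω)) (𝓝 (A (T ω) ω)) :=
        ((hAc ω).tendsto (T ω)).mono_left nhdsWithin_le_nhds
      exact le_of_tendsto htd (eventually_nhdsWithin_of_forall fun s hs => (hFree ω s hs).2)
  obtain ⟨D, hDc, hDd⟩ := TopologicalSpace.exists_countable_dense ℝ≥0
  have hAdap : ∀ u : ℝ≥0, StronglyMeasurable[ℱ u] (A u) := by
    intro u
    have h1 := hX.stronglyAdapted u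
    have h2 := hZ.stronglyAdapted u
    have heq : A u = fun ω => X u ω * X u ω - (X u ω ^ 2 - A u ω) := by
      funext ω; ring
    rw [heq]
    exact (h1.mul h1).sub h2
  have hTset : ∀ u : ℝ≥0, u ≤ S →
      {ω | T ω < u} = {ω | c < A u ω} ∪ ⋃ q ∈ D ∩ Iio u, {ω | l' < X q ω} := by
    intro u huS
    ext ω
    simp only [Set.mem_setOf_eq, Set.mem_union, Set.mem_iUnion, exists_prop, Set.mem_inter_iff,
      Set.mem_Iio]
    constructor
    · intro h
      obtain ⟨v, hvU, hvu⟩ := exists_lt_of_csInf_lt (hUne ω) h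
      rcases hvU with rfl | ⟨hvS, hv⟩
      · exact absurd hvu (not_lt.2 huS)
      rcases hv with hXv | hAv
      · have hopen : IsOpen {s : ℝ≥0 | s < u ∧ l' < X s ω} :=
          IsOpen.inter isOpen_Iio ((isOpen_Ioi).preimage (hXc ω))
        obtain ⟨q, hqW, hqD⟩ := hDd.exists_mem_open hopen ⟨v, hvu, hXv⟩
        exact Or.inr ⟨q, ⟨hqW, hqD.1⟩, hqD.2⟩
      · exact Or.inl (lt_of_lt_of_le hAv (hAm ω hvu.le))
    · rintro (hAu | ⟨q, ⟨hqD, hqu⟩, hqX⟩)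
      · have hu0 : u ≠ 0 := by
          rintro rfl; rw [hA0] at hAu; exact absurd hAu (not_lt.2 hc.le)
        haveI : (𝓝[<] u).NeBot := nhdsWithin_Iio_self_neBot' ⟨0, pos_iff_ne_zero.2 hu0⟩
        have htd : Tendsto (fun s => A s ω) (𝓝[<] u) (𝓝 (A u ω)) :=
          ((hAc ω).tendsto u).mono_left nhdsWithin_le_nhds
        have hev : ∀ᶠ s in 𝓝[<] u, c < A s ω := htd.eventually_const_lt hAu
        obtain ⟨s, hs1, hs2⟩ := (hev.and eventually_mem_nhdsWithin).exists
        exact lt_of_le_of_lt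
          (hmemT ω s (Set.mem_insert_of_mem _ ⟨(le_of_lt hs2).trans huS, Or.inr hs1⟩)) hs2
      · exact lt_of_le_of_lt
          (hmemT ω q (Set.mem_insert_of_mem _ ⟨hqu.le.trans huS, Or.inl hqX⟩)) hqu
  have hTmeas : ∀ u : ℝ≥0, u ≤ S → MeasurableSet[ℱ u] {ω | T ω < u} := by
    intro u huS
    rw [hTset u huS]
    refine MeasurableSet.union (measurableSet_lt measurable_const (hAdap u).measurable) ?_
    refine MeasurableSet.biUnion (hDc.mono Set.inter_subset_left) ?_
    intro q hq
    exact ℱ.mono hq.2.le _ (measurableSet_lt measurable_const (hX.stronglyAdapted q).measurable)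
  -- on the event, X (T ω) ω ≥ l'
  have hEsub : ∀ ω, (∃ t ≤ S, A t ω ≤ c ∧ l ≤ X t ω) → l' ≤ X (T ω) ω := by
    rintro ω ⟨t, htS, hAt, hXt⟩
    set C := {s : ℝ≥0 | l ≤ X s ω} with hC
    have hCc : IsClosed C := isClosed_le continuous_const (hXc ω)
    have hCne : C.Nonempty := ⟨t, hXt⟩
    set t1 := sInf C with ht1def
    have ht1C : t1 ∈ C := hCc.csInf_mem hCne (OrderBot.bddBelow _)
    have ht1t : t1 ≤ t := csInf_le (OrderBot.bddBelow _) hXt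
    have hXt1 : l ≤ X t1 ω := ht1C
    have hAt1 : A t1 ω ≤ c := le_trans (hAm ω ht1t) hAt
    have hTt1 : T ω ≤ t1 := hmemT ω t1
      (Set.mem_insert_of_mem _ ⟨ht1t.trans htS, Or.inl (lt_of_lt_of_le hll hXt1)⟩)
    rcases eq_or_lt_of_le hTt1 with heq | hlt
    · rw [heq]; exact hll.le.trans hXt1
    · by_contra hcon
      push_neg at hcon
      have hev0 : ∀ᶠ s in 𝓝 (T ω), X s ω < l' := (hXc ω).continuousAt (Iio_mem_nhds hcon)
      have hev : ∀ᶠ s in 𝓝[≥] (T ω), X s ω < l' := hev0.filter_mono nhdsWithin_le_nhds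
      have hfreq : ∃ᶠ s in 𝓝[≥] (T ω), l' < X s ω := by
        rw [Filter.frequently_iff]
        intro V hV
        obtain ⟨u, hu, hVu⟩ := (mem_nhdsGE_iff_exists_mem_Ioc_Ico_subset hlt).1 hV
        obtain ⟨v, hvU, hvu⟩ := exists_lt_of_csInf_lt (hUne ω) hu.1
        have hTv : T ω ≤ v := hmemT ω v hvU
        have hvt1 : v < t1 := lt_of_lt_of_le hvu hu.2
        rcases hvU with rfl | ⟨hvS, hv⟩
        · exact absurd hvt1 (not_lt.2 (ht1t.trans htS))
        rcases hv with hXv | hAv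
        · exact ⟨v, hVu ⟨hTv, hvu⟩, hXv⟩
        · exact absurd hAv (not_lt.2 (le_trans (hAm ω (hvt1.le.trans ht1t)) hAt))
      obtain ⟨s, hs1, hs2⟩ := (hev.and_frequently hfreq).exists
      exact lt_asymm hs1 hs2
  -- dyadic grids
  set ψ : ℕ → ℕ → ℝ≥0 := fun N j => min S (j * (S / 2 ^ N)) with hψdef
  have hψ0 : ∀ N, ψ N 0 = 0 := by intro N; simp [hψdef]
  have hψS : ∀ N j, ψ N j ≤ S := fun N j => min_le_left _ _
  have hψmono : ∀ N, Monotone (ψ N) := by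
    intro N i j hij
    exact min_le_min le_rfl (mul_le_mul_left (by exact_mod_cast hij) _)
  have h2ne : ∀ N : ℕ, ((2 : ℝ≥0) ^ N) ≠ 0 := fun N => pow_ne_zero _ two_ne_zero
  have hψtop : ∀ N, ψ N (2 ^ N) = S := by
    intro N
    have h2 : ((2 ^ N : ℕ) : ℝ≥0) = (2 : ℝ≥0) ^ N := by push_cast; ring
    have hm : ((2 ^ N : ℕ) : ℝ≥0) * (S / 2 ^ N) = S := by
      rw [h2, mul_div_assoc', mul_comm, mul_div_assoc, div_self (h2ne N), mul_one]
    show min S (((2 ^ N : ℕ) : ℝ≥0) * (S / 2 ^ N)) = S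
    rw [hm, min_self]
  have hψstep : ∀ N j, ψ N (j + 1) ≤ ψ N j + S / 2 ^ N := by
    intro N j
    rcases le_total ((j : ℝ≥0) * (S / 2 ^ N)) S with h | h
    · have hj : ψ N j = (j : ℝ≥0) * (S / 2 ^ N) := min_eq_right h
      rw [hj]
      calc ψ N (j+1) ≤ ((j+1 : ℕ) : ℝ≥0) * (S / 2 ^ N) := min_le_right _ _
        _ = (j : ℝ≥0) * (S / 2 ^ N) + S / 2 ^ N := by push_cast; ring
    · have hj : ψ N j = S := min_eq_left h
      exact le_trans (hψS N (j+1)) (by rw [hj]; exact le_self_add)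
  have hex : ∀ (N : ℕ) (ω : Ω), ∃ j, T ω < ψ N j ∨ 2 ^ N ≤ j := fun N ω => ⟨2 ^ N, Or.inr le_rfl⟩
  set ν : ℕ → Ω → ℕ := fun N ω => Nat.find (hex N ω) with hνdef
  have hνle : ∀ N ω, ν N ω ≤ 2 ^ N := fun N ω => Nat.find_le (Or.inr le_rfl)
  have hνspec : ∀ N ω, T ω < ψ N (ν N ω) ∨ 2 ^ N ≤ ν N ω := fun N ω => Nat.find_spec (hex N ω)
  have hTle : ∀ N ω, T ω ≤ ψ N (ν N ω) := by
    intro N ω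
    rcases hνspec N ω with h | h
    · exact h.le
    · rw [le_antisymm (hνle N ω) h, hψtop]; exact hTS ω
  have hgap : ∀ N ω, ψ N (ν N ω) ≤ T ω + S / 2 ^ N := by
    intro N ω
    rcases Nat.eq_zero_or_pos (ν N ω) with h0 | hpos
    · rw [h0, hψ0]; exact zero_le
    · obtain ⟨i, hi⟩ : ∃ i, ν N ω = i + 1 := ⟨ν N ω - 1, (Nat.succ_pred_eq_of_pos hpos).symm⟩
      have hmin : ¬(T ω < ψ N i ∨ 2 ^ N ≤ i) := Nat.find_min (hex N ω) (lt_of_lt_of_le i.lt_succ_self hi.ge)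
      push_neg at hmin
      calc ψ N (ν N ω) = ψ N (i + 1) := by rw [hi]
        _ ≤ ψ N i + S / 2 ^ N := hψstep N i
        _ ≤ T ω + S / 2 ^ N := add_le_add_left hmin.1 _
  have hconv : ∀ ω, Tendsto (fun N => ψ N (ν N ω)) atTop (𝓝 (T ω)) := by
    intro ω
    rw [← NNReal.tendsto_coe]
    have hub : Tendsto (fun N : ℕ => (T ω : ℝ) + (S : ℝ) / 2 ^ N) atTop (𝓝 (T ω)) := by
      have : Tendsto (fun N : ℕ => (S : ℝ) / 2 ^ N) atTop (𝓝 0) :=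
        tendsto_const_nhds.div_atTop (tendsto_pow_atTop_atTop_of_one_lt one_lt_two)
      simpa using tendsto_const_nhds.add this
    refine tendsto_of_tendsto_of_tendsto_of_le_of_le tendsto_const_nhds hub ?_ ?_
    · exact fun N => NNReal.coe_le_coe.2 (hTle N ω)
    · intro N
      calc ((ψ N (ν N ω) : ℝ≥0) : ℝ) ≤ ((T ω + S / 2 ^ N : ℝ≥0) : ℝ) :=
            NNReal.coe_le_coe.2 (hgap N ω)
        _ = (T ω : ℝ) + (S : ℝ) / 2 ^ N := by push_cast; ring
  -- discrete filtrations and martingales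
  set 𝒢 : ℕ → Filtration ℕ m := fun N =>
    { seq := fun j => ℱ (ψ N j)
      mono' := fun i j hij => ℱ.mono (hψmono N hij)
      le' := fun j => ℱ.le (ψ N j) } with h𝒢def
  set Z : ℝ≥0 → Ω → ℝ := fun t ω => X t ω ^ 2 - A t ω with hZdefn
  have hZmartD : ∀ N, Martingale (fun j => Z (ψ N j)) (𝒢 N) ℙ := by
    intro N
    exact ⟨fun j => hZ.stronglyAdapted (ψ N j), fun i j hij => hZ.2 (ψ N i) (ψ N j) (hψmono N hij)⟩
  set ν' : ℕ → Ω → WithTop ℕ := fun N ω => WithTop.some (ν N ω) with hν'def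
  have hνle' : ∀ N ω, ν' N ω ≤ WithTop.some (2 ^ N) := fun N ω =>
    WithTop.coe_le_coe.2 (hνle N ω)
  have hνstop : ∀ N, IsStoppingTime (𝒢 N) (ν' N) := by
    intro N j
    have hνj : {ω | ν' N ω ≤ WithTop.some j} = {ω | ν N ω ≤ j} := by
      ext ω; simp [hν'def]
    rw [hνj]
    by_cases hj : 2 ^ N ≤ j
    · have huniv : {ω | ν N ω ≤ j} = Set.univ :=
        eq_univ_of_forall fun ω => (hνle N ω).trans hj
      rw [huniv]; exact MeasurableSet.univ
    · have hset : {ω | ν N ω ≤ j} = {ω | T ω < ψ N j} := by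
        ext ω
        simp only [Set.mem_setOf_eq]
        constructor
        · intro h
          rcases hνspec N ω with hs | hs
          · exact lt_of_lt_of_le hs (hψmono N h)
          · exact absurd (hs.trans h) hj
        · intro h
          exact Nat.find_le (Or.inl h)
      rw [hset]
      exact hTmeas (ψ N j) (hψS N j)
  -- stopped values
  set G : ℕ → Ω → ℝ := fun N => stoppedValue (fun j => Z (ψ N j)) (ν' N) with hGdef
  have hGint : ∀ N, Integrable (G N) ℙ := fun N =>
    integrable_stoppedValue ℕ (hνstop N) (fun j => hZ.integrable (ψ N j)) (hνle' N)
  have hGzero : ∀ N, ∫ ω, G N ω ∂ℙ = 0 := by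
    intro N
    have h0 : IsStoppingTime (𝒢 N) (fun _ : Ω => WithTop.some (0 : ℕ)) := isStoppingTime_const _ 0
    have hle : (fun _ : Ω => WithTop.some (0 : ℕ)) ≤ ν' N := fun ω => WithTop.coe_le_coe.2 (Nat.zero_le _)
    have hZ0 : stoppedValue (fun j => Z (ψ N j)) (fun _ : Ω => WithTop.some (0 : ℕ)) = fun _ => (0 : ℝ) := by
      rw [stoppedValue_const]
      funext ω
      simp only [hψ0 N, hZdefn, hX0 ω, hA0 ω]
      norm_num
    have h1 := (hZmartD N).submartingale.expected_stoppedValue_mono h0 (hνstop N) hle (hνle' N)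
    have h2 := (hZmartD N).neg.submartingale.expected_stoppedValue_mono h0 (hνstop N) hle (hνle' N)
    rw [hZ0] at h1
    have h1' : (0:ℝ) ≤ ∫ ω, G N ω ∂ℙ := by simpa using h1
    have hneg : stoppedValue (-fun j => Z (ψ N j)) (ν' N) = fun ω => - G N ω := by
      funext ω; simp [stoppedValue, hGdef]
    have hneg0 : stoppedValue (-fun j => Z (ψ N j)) (fun _ : Ω => WithTop.some (0 : ℕ)) = fun _ => (0 : ℝ) := by
      rw [stoppedValue_const]
      funext ω
      simp only [hψ0 N, hZdefn, Pi.neg_apply, hX0 ω, hA0 ω]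
      norm_num
    rw [hneg, hneg0] at h2
    have h2' : (0:ℝ) ≤ - ∫ ω, G N ω ∂ℙ := by simpa [integral_neg] using h2
    linarith
  -- conditional expectation representation and uniform integrability
  have hrep : ∀ N, G N =ᵐ[ℙ] ℙ[Z S | ((hνstop N).measurableSpace)] := by
    intro N
    have := Martingale.stoppedValue_ae_eq_condExp_of_le_const (hZmartD N) (hνstop N) (hνle' N)
    rwa [hψtop N] at this
  have h𝒜le : ∀ N, ((hνstop N).measurableSpace) ≤ m := fun N => (hνstop N).measurableSpace_le
  have hZSint : Integrable (Z S) ℙ := hZ.integrable S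
  have hUI : UniformIntegrable G 1 ℙ :=
    (hZSint.uniformIntegrable_condExp h𝒜le).ae_eq fun N => (hrep N).symm
  -- pointwise convergence and limits
  set ZT : Ω → ℝ := fun ω => Z (T ω) ω with hZTdef
  have hGconv : ∀ ω, Tendsto (fun N => G N ω) atTop (𝓝 (ZT ω)) := by
    intro ω
    have hZc : Continuous fun t => Z t ω := ((hXc ω).pow 2).sub (hAc ω)
    exact (hZc.continuousAt.tendsto.comp (hconv ω))
  have hGmeas : ∀ N, AEStronglyMeasurable (G N) ℙ := fun N => hUI.1 N
  have hZTmeas : AEStronglyMeasurable ZT ℙ :=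
    aestronglyMeasurable_of_tendsto_ae atTop hGmeas (Eventually.of_forall hGconv)
  have hZTL1 : MemLp ZT 1 ℙ := by
    obtain ⟨C, hC⟩ := hUI.2.2
    refine ⟨hZTmeas, lt_of_le_of_lt
      (Lp.eLpNorm_lim_le_liminf_eLpNorm hGmeas ZT (Eventually.of_forall hGconv)) ?_⟩
    exact lt_of_le_of_lt (liminf_le_of_frequently_le (Frequently.of_forall fun N => hC N))
      ENNReal.coe_lt_top
  have hL1 : Tendsto (fun N => eLpNorm (G N - ZT) 1 ℙ) atTop (𝓝 0) :=
    tendsto_Lp_finite_of_tendsto_ae le_rfl ENNReal.one_ne_top hGmeas hZTL1 hUI.2.1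
      (Eventually.of_forall hGconv)
  have hZTint : Integrable ZT ℙ := memLp_one_iff_integrable.1 hZTL1
  have hint0 : ∫ ω, ZT ω ∂ℙ = 0 := by
    have ht : Tendsto (fun N => ∫ ω, G N ω ∂ℙ) atTop (𝓝 (∫ ω, ZT ω ∂ℙ)) := by
      refine tendsto_integral_of_L1 ZT hZTint.1 (Eventually.of_forall hGint) ?_
      have : ∀ N, (∫⁻ x, ‖G N x - ZT x‖ₑ ∂ℙ) = eLpNorm (G N - ZT) 1 ℙ := by
        intro N
        rw [eLpNorm_one_eq_lintegral_enorm]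
        rfl
      simp_rw [this]
      exact hL1
    have ht2 : Tendsto (fun _ : ℕ => (0 : ℝ)) atTop (𝓝 (∫ ω, ZT ω ∂ℙ)) := by
      refine ht.congr fun N => (hGzero N)
    exact (tendsto_nhds_unique ht2 tendsto_const_nhds).symm ▸ rfl
  -- measurability of stopped values for general adapted processes
  have hSVmeas : ∀ (f : ℝ≥0 → Ω → ℝ), (∀ t, StronglyMeasurable[ℱ t] (f t)) → ∀ N : ℕ,
      AEStronglyMeasurable (stoppedValue (fun j => f (ψ N j)) (ν' N)) ℙ := by
    intro f hf N
    rw [stoppedValue_eq (hνle' N)]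
    have hsm : StronglyMeasurable
        (∑ i ∈ Finset.range (2 ^ N + 1), Set.indicator {ω | ν' N ω = WithTop.some i} (f (ψ N i))) := by
      refine Finset.stronglyMeasurable_sum _ fun i _ => ?_
      refine StronglyMeasurable.indicator ((hf (ψ N i)).mono (ℱ.le _)) ?_
      exact (𝒢 N).le i _ ((hνstop N).measurableSet_eq i)
    exact hsm.aestronglyMeasurable
  set AT : Ω → ℝ := fun ω => A (T ω) ω with hATdef
  set XT : Ω → ℝ := fun ω => X (T ω) ω with hXTdef
  have hATconv : ∀ ω, Tendsto (fun N => stoppedValue (fun j => A (ψ N j)) (ν' N) ω)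
      atTop (𝓝 (AT ω)) := fun ω => ((hAc ω).continuousAt.tendsto.comp (hconv ω))
  have hATmeas : AEStronglyMeasurable AT ℙ :=
    aestronglyMeasurable_of_tendsto_ae atTop (hSVmeas A hAdap) (Eventually.of_forall hATconv)
  have hATnonneg : ∀ ω, 0 ≤ AT ω := by
    intro ω
    simpa [hA0 ω] using hAm ω (show (0:ℝ≥0) ≤ T ω from zero_le)
  have hATint : Integrable AT ℙ := by
    refine ⟨hATmeas, ?_⟩
    refine HasFiniteIntegral.of_bounded (C := c) (Eventually.of_forall fun ω => ?_)
    rw [Real.norm_eq_abs, abs_le]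
    exact ⟨by linarith [hATnonneg ω, hc], hAT ω⟩
  have hXTsq : (fun ω => XT ω ^ 2) = fun ω => AT ω + ZT ω := by
    funext ω
    simp only [hXTdef, hATdef, hZTdef, hZdefn]
    ring
  have hXTsqint : Integrable (fun ω => XT ω ^ 2) ℙ := by
    rw [hXTsq]; exact hATint.add hZTint
  have hIle : ∫ ω, XT ω ^ 2 ∂ℙ ≤ c := by
    calc ∫ ω, XT ω ^ 2 ∂ℙ = ∫ ω, (AT ω + ZT ω) ∂ℙ := by rw [← hXTsq]
      _ = (∫ ω, AT ω ∂ℙ) + ∫ ω, ZT ω ∂ℙ := integral_add hATint hZTint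
      _ = ∫ ω, AT ω ∂ℙ := by rw [hint0, add_zero]
      _ ≤ ∫ _ω, c ∂ℙ := integral_mono hATint (integrable_const c) fun ω => hAT ω
      _ = c := by simp
  have hcheb := mul_meas_ge_le_integral_of_nonneg
    (f := fun ω => XT ω ^ 2) (Eventually.of_forall fun ω => sq_nonneg _) hXTsqint (l' ^ 2)
  have hsub : {ω | ∃ t ≤ S, A t ω ≤ c ∧ l ≤ X t ω} ⊆ {ω | l' ^ 2 ≤ XT ω ^ 2} := by
    intro ω hω
    exact pow_le_pow_left₀ hl'.le (hEsub ω hω) 2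
  have hne : ℙ {ω | l' ^ 2 ≤ XT ω ^ 2} ≠ ⊤ := measure_ne_top _ _
  have h2 : (ℙ {ω | l' ^ 2 ≤ XT ω ^ 2}).toReal ≤ c / l' ^ 2 := by
    rw [le_div_iff₀ (by positivity)]
    calc (ℙ {ω | l' ^ 2 ≤ XT ω ^ 2}).toReal * l' ^ 2
        = l' ^ 2 * (ℙ {ω | l' ^ 2 ≤ XT ω ^ 2}).toReal := mul_comm _ _
      _ ≤ ∫ ω, XT ω ^ 2 ∂ℙ := hcheb
      _ ≤ c := hIle
  calc ℙ {ω | ∃ t ≤ S, A t ω ≤ c ∧ l ≤ X t ω} ≤ ℙ {ω | l' ^ 2 ≤ XT ω ^ 2} := measure_mono hsub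
    _ ≤ ENNReal.ofReal (c / l' ^ 2) := (ENNReal.le_ofReal_iff_toReal_le hne (by positivity)).2 h2

lemma lemL
    (ℱ : Filtration ℝ≥0 m) (M Q : ℝ≥0 → Ω → ℝ)
    (hM0 : ∀ ω, M 0 ω = 0) (hMcont : ∀ ω, Continuous fun t => M t ω)
    (hQ0 : ∀ ω, Q 0 ω = 0) (hQcont : ∀ ω, Continuous fun t => Q t ω)
    (hQmono : ∀ ω, Monotone fun t => Q t ω)
    (τ : ℕ → Ω → ℝ≥0)
    (hτtop : ∀ ω, Tendsto (fun n => τ n ω) atTop atTop)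
    (hMloc : ∀ n, Martingale (MeasureTheory.stoppedProcess M (fun ω => ((τ n ω : ℝ≥0) : WithTop ℝ≥0))) ℱ ℙ)
    (hQloc : ∀ n,
      Martingale (MeasureTheory.stoppedProcess (fun t ω => (M t ω)^2 - Q t ω) (fun ω => ((τ n ω : ℝ≥0) : WithTop ℝ≥0))) ℱ ℙ)
    (c lam : ℝ) (hc : 0 < c) (hlam : 0 < lam) :
    ℙ {ω | ∃ t, Q t ω ≤ c ∧ lam ≤ M t ω} ≤ ENNReal.ofReal (c / lam ^ 2) := by
  have key : ∀ l' : ℝ, 0 < l' → l' < lam →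
      ℙ {ω | ∃ t, Q t ω ≤ c ∧ lam ≤ M t ω} ≤ ENNReal.ofReal (c / l' ^ 2) := by
    intro l' hl' hll
    set D : ℕ → Set Ω := fun k =>
      {ω | ∃ t ≤ (k : ℝ≥0), Q (min t (τ k ω)) ω ≤ c ∧ lam ≤ M (min t (τ k ω)) ω} with hD
    have hDbound : ∀ k, ℙ (D k) ≤ ENNReal.ofReal (c / l' ^ 2) := by
      intro k
      exact core_bound ℱ (MeasureTheory.stoppedProcess M (fun ω => ((τ k ω : ℝ≥0) : WithTop ℝ≥0))) (fun t ω => Q (min t (τ k ω)) ω)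
        (fun ω => by
          show M (min 0 (τ k ω)) ω = 0
          rw [min_eq_left zero_le, hM0 ω])
        (fun ω => (hMcont ω).comp (continuous_id.min continuous_const))
        (fun ω => by
          show Q (min 0 (τ k ω)) ω = 0
          rw [min_eq_left zero_le, hQ0 ω])
        (fun ω => (hQcont ω).comp (continuous_id.min continuous_const))
        (fun ω a b hab => hQmono ω (min_le_min hab le_rfl))
        (hMloc k) (hQloc k) (k : ℝ≥0) c lam l' hc hl' hll
    have hsub : {ω | ∃ t, Q t ω ≤ c ∧ lam ≤ M t ω} ⊆ ⋃ k, ⋂ j ∈ Set.Ici k, D j := by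
      rintro ω ⟨t, hQt, hMt⟩
      obtain ⟨K, hK⟩ := Filter.eventually_atTop.1 ((hτtop ω).eventually_ge_atTop t)
      obtain ⟨K2, hK2⟩ := exists_nat_ge t
      refine Set.mem_iUnion.2 ⟨max K K2, Set.mem_iInter₂.2 fun j hj => ?_⟩
      have hj1 : t ≤ τ j ω := hK j (le_trans (le_max_left _ _) hj)
      have hj2 : t ≤ (j : ℝ≥0) := le_trans hK2 (by
        exact_mod_cast Nat.cast_le.2 (le_trans (le_max_right K K2) hj))
      exact ⟨t, hj2, by rw [min_eq_left hj1]; exact hQt, by rw [min_eq_left hj1]; exact hMt⟩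
    have hmono : Monotone fun k => ⋂ j ∈ Set.Ici k, D j := by
      intro a b hab
      exact Set.biInter_subset_biInter_left fun j hj => le_trans hab hj
    calc ℙ {ω | ∃ t, Q t ω ≤ c ∧ lam ≤ M t ω} ≤ ℙ (⋃ k, ⋂ j ∈ Set.Ici k, D j) :=
          measure_mono hsub
      _ = ⨆ k, ℙ (⋂ j ∈ Set.Ici k, D j) := Directed.measure_iUnion hmono.directed_le
      _ ≤ ENNReal.ofReal (c / l' ^ 2) := iSup_le fun k => le_trans
          (measure_mono (Set.biInter_subset_of_mem (Set.mem_Ici.2 le_rfl))) (hDbound k)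
  -- take the limit l' ↑ lam
  have hofReal : Tendsto (fun n : ℕ => ENNReal.ofReal (c / (lam - lam / ((n:ℝ) + 2)) ^ 2)) atTop
      (𝓝 (ENNReal.ofReal (c / lam ^ 2))) := by
    refine (ENNReal.continuous_ofReal.tendsto _).comp ?_
    have h3 : Tendsto (fun n : ℕ => lam / ((n:ℝ) + 2)) atTop (𝓝 0) :=
      tendsto_const_nhds.div_atTop (tendsto_atTop_add_const_right _ 2 tendsto_natCast_atTop_atTop)
    have h2 : Tendsto (fun n : ℕ => lam - lam / ((n:ℝ) + 2)) atTop (𝓝 lam) := by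
      simpa using tendsto_const_nhds.sub h3
    exact tendsto_const_nhds.div (h2.pow 2) (by positivity)
  refine ge_of_tendsto hofReal (Eventually.of_forall fun n => key _ ?_ ?_)
  · have h1 : lam / ((n:ℝ) + 2) < lam := by
      apply div_lt_self hlam
      have : (0:ℝ) ≤ (n:ℝ) := Nat.cast_nonneg n
      linarith
    linarith
  · have h0 : 0 < lam / ((n:ℝ) + 2) := by positivity
    linarith

end Core

theorem local_martingale_maximal_bound
    {Ω : Type*} {m : MeasurableSpace Ω} {ℙ : Measure Ω} [IsProbabilityMeasure ℙ]
    (ℱ : Filtration ℝ≥0 m)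
    (M Q : ℝ≥0 → Ω → ℝ)
    -- continuous paths, started in zero
    (hM0 : ∀ ω, M 0 ω = 0)
    (hMcont : ∀ ω, Continuous fun t => M t ω)
    -- quadratic variation: continuous, nondecreasing, started in zero
    (hQ0 : ∀ ω, Q 0 ω = 0)
    (hQcont : ∀ ω, Continuous fun t => Q t ω)
    (hQmono : ∀ ω, Monotone fun t => Q t ω)
    -- localizing sequence of stopping times
    (τ : ℕ → Ω → ℝ≥0)
    (hτ : ∀ n, IsStoppingTime ℱ (fun ω => ((τ n ω : ℝ≥0) : WithTop ℝ≥0)))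
    (hτmono : ∀ ω, Monotone fun n => τ n ω)
    (hτtop : ∀ ω, Tendsto (fun n => τ n ω) atTop atTop)
    -- M is a continuous local martingale with quadratic variation Q:
    -- the stopped processes M^{τ n} and (M² - Q)^{τ n} are martingales
    (hMloc : ∀ n, Martingale (MeasureTheory.stoppedProcess M (fun ω => ((τ n ω : ℝ≥0) : WithTop ℝ≥0))) ℱ ℙ)
    (hQloc : ∀ n,
      Martingale (MeasureTheory.stoppedProcess (fun t ω => (M t ω)^2 - Q t ω) (fun ω => ((τ n ω : ℝ≥0) : WithTop ℝ≥0))) ℱ ℙ) :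
    ∀ κ : ℝ, 0 < κ →
      ℙ {ω | ∃ t, κ ≤ M t ω - Q t ω} ≤
        ENNReal.ofReal ((κ^2)⁻¹ + ∑' n : ℕ, (2:ℝ)^(n+1) / ((2:ℝ)^n + κ)^2) := by
  intro κ hκ
  classical
  set B : Set Ω := {ω | ∃ t, Q t ω ≤ 1 ∧ κ ≤ M t ω} with hB
  set C : ℕ → Set Ω := fun n => {ω | ∃ t, Q t ω ≤ 2^(n+1) ∧ 2^n + κ ≤ M t ω} with hC
  have hdecomp : {ω | ∃ t, κ ≤ M t ω - Q t ω} ⊆ B ∪ ⋃ n, C n := by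
    rintro ω ⟨t, ht⟩
    have hQnn : 0 ≤ Q t ω := by simpa [hQ0 ω] using hQmono ω (show (0:ℝ≥0) ≤ t from zero_le)
    have hM : κ + Q t ω ≤ M t ω := by linarith
    by_cases h1 : Q t ω ≤ 1
    · exact Or.inl ⟨t, h1, by linarith⟩
    · push_neg at h1
      have hex : ∃ j : ℕ, Q t ω < 2 ^ (j + 1) := by
        obtain ⟨j, hj⟩ := pow_unbounded_of_one_lt (Q t ω) (one_lt_two (α := ℝ))
        exact ⟨j, lt_of_lt_of_le hj (pow_le_pow_right₀ one_le_two (Nat.le_succ j))⟩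
      set n := Nat.find hex with hn
      have hlt : Q t ω < 2 ^ (n + 1) := Nat.find_spec hex
      have hge : (2:ℝ) ^ n ≤ Q t ω := by
        rcases Nat.eq_zero_or_pos n with h0 | hpos
        · rw [h0]; simpa using h1.le
        · obtain ⟨i, hi⟩ : ∃ i, n = i + 1 := ⟨n - 1, (Nat.succ_pred_eq_of_pos hpos).symm⟩
          have hm := Nat.find_min hex (show i < n from lt_of_lt_of_le i.lt_succ_self hi.ge)
          push_neg at hm
          rw [hi]; exact hm
      exact Or.inr (Set.mem_iUnion.2 ⟨n, t, hlt.le, by linarith⟩)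
  have hnn : ∀ n : ℕ, (0:ℝ) ≤ (2:ℝ)^(n+1) / ((2:ℝ)^n + κ)^2 := fun n => by positivity
  have hsum : Summable (fun n : ℕ => (2:ℝ)^(n+1) / ((2:ℝ)^n + κ)^2) := by
    refine Summable.of_nonneg_of_le hnn (fun n => ?_) (summable_geometric_two.mul_left 2)
    have h2n : (0:ℝ) < 2 ^ n := by positivity
    have hle : ((2:ℝ)^n)^2 ≤ ((2:ℝ)^n + κ)^2 := by nlinarith
    calc (2:ℝ)^(n+1) / ((2:ℝ)^n + κ)^2 ≤ (2:ℝ)^(n+1) / ((2:ℝ)^n)^2 := by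
          apply div_le_div_of_nonneg_left (by positivity) (by positivity) hle
      _ = 2 * (1/2)^n := by
          rw [div_pow, one_pow, pow_succ]
          field_simp
  have hBb : ℙ B ≤ ENNReal.ofReal ((κ^2)⁻¹) := by
    have := lemL ℱ M Q hM0 hMcont hQ0 hQcont hQmono τ hτtop hMloc hQloc 1 κ one_pos hκ
    simpa [one_div] using this
  have hCb : ∀ n, ℙ (C n) ≤ ENNReal.ofReal ((2:ℝ)^(n+1) / ((2:ℝ)^n + κ)^2) := fun n =>
    lemL ℱ M Q hM0 hMcont hQ0 hQcont hQmono τ hτtop hMloc hQloc (2^(n+1)) (2^n + κ)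
      (by positivity) (by positivity)
  calc ℙ {ω | ∃ t, κ ≤ M t ω - Q t ω} ≤ ℙ (B ∪ ⋃ n, C n) := measure_mono hdecomp
    _ ≤ ℙ B + ℙ (⋃ n, C n) := measure_union_le _ _
    _ ≤ ℙ B + ∑' n, ℙ (C n) := add_le_add_right (measure_iUnion_le _) _
    _ ≤ ENNReal.ofReal ((κ^2)⁻¹) + ∑' n, ENNReal.ofReal ((2:ℝ)^(n+1) / ((2:ℝ)^n + κ)^2) :=
        add_le_add hBb (ENNReal.tsum_le_tsum hCb)
    _ = ENNReal.ofReal ((κ^2)⁻¹) + ENNReal.ofReal (∑' n, (2:ℝ)^(n+1) / ((2:ℝ)^n + κ)^2) := by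
        rw [ENNReal.ofReal_tsum_of_nonneg hnn hsum]
    _ = ENNReal.ofReal ((κ^2)⁻¹ + ∑' n : ℕ, (2:ℝ)^(n+1) / ((2:ℝ)^n + κ)^2) :=
        (ENNReal.ofReal_add (by positivity) (tsum_nonneg hnn)).symm
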